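/- Let λ ∈ ℝ with λ ≠ 0. Then the stabilizer {U ∈ SU(5) : Uᵀ σ(λ, λ) U = σ(λ, λ)} consists exactly of the block-diagonal matrices diag(V, 1) where V is a 4×4 complex unitary matrix satisfying Vᵀ J V = J, with J = (E'_{12} − E'_{21}) + (E'_{34} − E'_{43}) the standard 4×4 symplectic form (E'_{ij} the 4×4 matrix units); that is, the stabilizer of σ(λ, λ) in SU(5) is isomorphic to the compact symplectic group Sp(2) = U(4) ∩ Sp(4, ℂ). -/

import Mathlib

noncomputable section

open Matrix

/-- The antisymmetric `5×5` matrix `σ(λ, μ)` representing the 2-form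
`λ e¹∧e² + μ e³∧e⁴` on `ℂ⁵`. -/
def sigmaForm (lam mu : ℝ) : Matrix (Fin 5) (Fin 5) ℂ :=
  (lam : ℂ) • (single 0 1 1 - single 1 0 1) +
    (mu : ℂ) • (single 2 3 1 - single 3 2 1)

/-- The standard `4×4` symplectic form `J = (E₁₂ − E₂₁) + (E₃₄ − E₄₃)`. -/
def J4 : Matrix (Fin 4) (Fin 4) ℂ :=
  (single 0 1 1 - single 1 0 1) + (single 2 3 1 - single 3 2 1)

/-- The block-diagonal matrix `diag(V, 1)` with `V` of size `4×4`. -/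
def blockDiag41 (V : Matrix (Fin 4) (Fin 4) ℂ) : Matrix (Fin 5) (Fin 5) ℂ := fun i j =>
  if hi : (i : ℕ) < 4 then
    (if hj : (j : ℕ) < 4 then V ⟨(i : ℕ), hi⟩ ⟨(j : ℕ), hj⟩ else 0)
  else if (j : ℕ) < 4 then 0 else 1

namespace Sp2Aux

lemma v5_0 : ((0:Fin 5):ℕ) = 0 := rfl
lemma v5_1 : ((1:Fin 5):ℕ) = 1 := rfl
lemma v5_2 : ((2:Fin 5):ℕ) = 2 := rfl
lemma v5_3 : ((3:Fin 5):ℕ) = 3 := rfl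
lemma v5_4 : ((4:Fin 5):ℕ) = 4 := rfl
lemma v4_0 : ((0:Fin 4):ℕ) = 0 := rfl
lemma v4_1 : ((1:Fin 4):ℕ) = 1 := rfl
lemma v4_2 : ((2:Fin 4):ℕ) = 2 := rfl
lemma v4_3 : ((3:Fin 4):ℕ) = 3 := rfl

lemma cs0 : Fin.castSucc (0 : Fin 4) = (0 : Fin 5) := rfl
lemma cs1 : Fin.castSucc (1 : Fin 4) = (1 : Fin 5) := rfl
lemma cs2 : Fin.castSucc (2 : Fin 4) = (2 : Fin 5) := rfl
lemma cs3 : Fin.castSucc (3 : Fin 4) = (3 : Fin 5) := rfl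

lemma sigma_eq (lam : ℝ) : sigmaForm lam lam =
    (lam : ℂ) • !![0,1,0,0,0;-1,0,0,0,0;0,0,0,1,0;0,0,-1,0,0;0,0,0,0,0] := by
  ext i j
  fin_cases i <;> fin_cases j <;>
    norm_num [sigmaForm, Matrix.single, Fin.ext_iff, v5_0, v5_1, v5_2, v5_3, v5_4]

lemma J4_eq : J4 = !![0,1,0,0;-1,0,0,0;0,0,0,1;0,0,-1,0] := by
  ext i j
  fin_cases i <;> fin_cases j <;>
    norm_num [J4, Matrix.single, Fin.ext_iff, v4_0, v4_1, v4_2, v4_3]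

lemma conj5 (lam : ℝ) (U : Matrix (Fin 5) (Fin 5) ℂ) (i j : Fin 5) :
    (Uᵀ * sigmaForm lam lam * U) i j =
      (lam : ℂ) * (U 0 i * U 1 j - U 1 i * U 0 j + U 2 i * U 3 j - U 3 i * U 2 j) := by
  rw [sigma_eq]
  simp [Matrix.mul_apply, Fin.sum_univ_five]
  ring

lemma conj4 (V : Matrix (Fin 4) (Fin 4) ℂ) (i j : Fin 4) :
    (Vᵀ * J4 * V) i j =
      V 0 i * V 1 j - V 1 i * V 0 j + V 2 i * V 3 j - V 3 i * V 2 j := by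
  rw [J4_eq]
  simp [Matrix.mul_apply, Fin.sum_univ_four]
  ring

lemma aux_cast (i j : Fin 4) : sigmaForm 1 1 i.castSucc j.castSucc = J4 i j := by
  fin_cases i <;> fin_cases j <;>
    norm_num [J4, sigmaForm, Matrix.single, Fin.ext_iff,
      v5_0, v5_1, v5_2, v5_3, v5_4, v4_0, v4_1, v4_2, v4_3]

lemma det4 (M : Matrix (Fin 4) (Fin 4) ℂ) : M.det =
    M 0 0 * (M 1 1 * (M 2 2 * M 3 3 - M 2 3 * M 3 2) - M 1 2 * (M 2 1 * M 3 3 - M 2 3 * M 3 1)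
      + M 1 3 * (M 2 1 * M 3 2 - M 2 2 * M 3 1))
  - M 0 1 * (M 1 0 * (M 2 2 * M 3 3 - M 2 3 * M 3 2) - M 1 2 * (M 2 0 * M 3 3 - M 2 3 * M 3 0)
      + M 1 3 * (M 2 0 * M 3 2 - M 2 2 * M 3 0))
  + M 0 2 * (M 1 0 * (M 2 1 * M 3 3 - M 2 3 * M 3 1) - M 1 1 * (M 2 0 * M 3 3 - M 2 3 * M 3 0)
      + M 1 3 * (M 2 0 * M 3 1 - M 2 1 * M 3 0))
  - M 0 3 * (M 1 0 * (M 2 1 * M 3 2 - M 2 2 * M 3 1) - M 1 1 * (M 2 0 * M 3 2 - M 2 2 * M 3 0)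
      + M 1 2 * (M 2 0 * M 3 1 - M 2 1 * M 3 0)) := by
  rw [Matrix.det_succ_row_zero]
  simp only [Fin.sum_univ_four, Matrix.det_fin_three, Matrix.submatrix_apply]
  norm_num [Fin.succAbove, Fin.lt_def, Fin.ext_iff,
    show (Fin.succ (2:Fin 3) : Fin 4) = 3 from rfl,
    show (Fin.castSucc (2:Fin 3) : Fin 4) = 2 from rfl,
    show (Fin.succ (1:Fin 3) : Fin 4) = 2 from rfl,
    show (Fin.castSucc (1:Fin 3) : Fin 4) = 1 from rfl,
    show (Fin.succ (0:Fin 3) : Fin 4) = 1 from rfl,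
    show (Fin.castSucc (0:Fin 3) : Fin 4) = 0 from rfl,
    show (((3:Fin 4):ℕ)) = 3 from rfl]
  ring

lemma det_of_symp (V : Matrix (Fin 4) (Fin 4) ℂ) (h : Vᵀ * J4 * V = J4) : V.det = 1 := by
  have e : ∀ i j, V 0 i * V 1 j - V 1 i * V 0 j + V 2 i * V 3 j - V 3 i * V 2 j = J4 i j := by
    intro i j; rw [← conj4, h]
  have e01 := e 0 1
  have e23 := e 2 3
  have e02 := e 0 2
  have e03 := e 0 3
  rw [J4_eq] at e01 e23 e02 e03
  change _ = (1:ℂ) at e01 e23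
  change _ = (0:ℂ) at e02 e03
  rw [det4]
  linear_combination (V 0 2 * V 1 3 - V 1 2 * V 0 3 + V 2 2 * V 3 3 - V 3 2 * V 2 3) * e01 + e23
    - (V 0 1 * V 1 3 - V 1 1 * V 0 3 + V 2 1 * V 3 3 - V 3 1 * V 2 3) * e02
    + (V 0 1 * V 1 2 - V 1 1 * V 0 2 + V 2 1 * V 3 2 - V 3 1 * V 2 2) * e03

lemma det5 (U : Matrix (Fin 5) (Fin 5) ℂ) (h0 : U 0 4 = 0) (h1 : U 1 4 = 0)
    (h2 : U 2 4 = 0) (h3 : U 3 4 = 0) :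
    U.det = U 4 4 * (U.submatrix Fin.castSucc Fin.castSucc).det := by
  have h0' : U 0 (Fin.last 4) = 0 := h0
  have h1' : U 1 (Fin.last 4) = 0 := h1
  have h2' : U 2 (Fin.last 4) = 0 := h2
  have h3' : U 3 (Fin.last 4) = 0 := h3
  have h44 : U (Fin.last 4) (Fin.last 4) = U 4 4 := rfl
  rw [Matrix.det_succ_column U 4]
  simp only [Fin.sum_univ_five, h0', h1', h2', h3', h44,
    show ((4:Fin 5)) = Fin.last 4 from rfl, Fin.succAbove_last]
  norm_num

lemma bd00 (V : Matrix (Fin 4) (Fin 4) ℂ) : blockDiag41 V 0 0 = V 0 0 := rfl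
lemma bd01 (V : Matrix (Fin 4) (Fin 4) ℂ) : blockDiag41 V 0 1 = V 0 1 := rfl
lemma bd02 (V : Matrix (Fin 4) (Fin 4) ℂ) : blockDiag41 V 0 2 = V 0 2 := rfl
lemma bd03 (V : Matrix (Fin 4) (Fin 4) ℂ) : blockDiag41 V 0 3 = V 0 3 := rfl
lemma bd04 (V : Matrix (Fin 4) (Fin 4) ℂ) : blockDiag41 V 0 4 = 0 := rfl
lemma bd10 (V : Matrix (Fin 4) (Fin 4) ℂ) : blockDiag41 V 1 0 = V 1 0 := rfl
lemma bd11 (V : Matrix (Fin 4) (Fin 4) ℂ) : blockDiag41 V 1 1 = V 1 1 := rfl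
lemma bd12 (V : Matrix (Fin 4) (Fin 4) ℂ) : blockDiag41 V 1 2 = V 1 2 := rfl
lemma bd13 (V : Matrix (Fin 4) (Fin 4) ℂ) : blockDiag41 V 1 3 = V 1 3 := rfl
lemma bd14 (V : Matrix (Fin 4) (Fin 4) ℂ) : blockDiag41 V 1 4 = 0 := rfl
lemma bd20 (V : Matrix (Fin 4) (Fin 4) ℂ) : blockDiag41 V 2 0 = V 2 0 := rfl
lemma bd21 (V : Matrix (Fin 4) (Fin 4) ℂ) : blockDiag41 V 2 1 = V 2 1 := rfl
lemma bd22 (V : Matrix (Fin 4) (Fin 4) ℂ) : blockDiag41 V 2 2 = V 2 2 := rfl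
lemma bd23 (V : Matrix (Fin 4) (Fin 4) ℂ) : blockDiag41 V 2 3 = V 2 3 := rfl
lemma bd24 (V : Matrix (Fin 4) (Fin 4) ℂ) : blockDiag41 V 2 4 = 0 := rfl
lemma bd30 (V : Matrix (Fin 4) (Fin 4) ℂ) : blockDiag41 V 3 0 = V 3 0 := rfl
lemma bd31 (V : Matrix (Fin 4) (Fin 4) ℂ) : blockDiag41 V 3 1 = V 3 1 := rfl
lemma bd32 (V : Matrix (Fin 4) (Fin 4) ℂ) : blockDiag41 V 3 2 = V 3 2 := rfl
lemma bd33 (V : Matrix (Fin 4) (Fin 4) ℂ) : blockDiag41 V 3 3 = V 3 3 := rfl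
lemma bd34 (V : Matrix (Fin 4) (Fin 4) ℂ) : blockDiag41 V 3 4 = 0 := rfl
lemma bd40 (V : Matrix (Fin 4) (Fin 4) ℂ) : blockDiag41 V 4 0 = 0 := rfl
lemma bd41 (V : Matrix (Fin 4) (Fin 4) ℂ) : blockDiag41 V 4 1 = 0 := rfl
lemma bd42 (V : Matrix (Fin 4) (Fin 4) ℂ) : blockDiag41 V 4 2 = 0 := rfl
lemma bd43 (V : Matrix (Fin 4) (Fin 4) ℂ) : blockDiag41 V 4 3 = 0 := rfl
lemma bd44 (V : Matrix (Fin 4) (Fin 4) ℂ) : blockDiag41 V 4 4 = 1 := rfl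


lemma bd_cc (V : Matrix (Fin 4) (Fin 4) ℂ) (a b : Fin 4) :
    blockDiag41 V a.castSucc b.castSucc = V a b := by
  simp [blockDiag41, a.is_lt, b.is_lt]

lemma bd_cl (V : Matrix (Fin 4) (Fin 4) ℂ) (a : Fin 4) :
    blockDiag41 V a.castSucc (Fin.last 4) = 0 := by
  simp [blockDiag41, a.is_lt]

lemma bd_lc (V : Matrix (Fin 4) (Fin 4) ℂ) (b : Fin 4) :
    blockDiag41 V (Fin.last 4) b.castSucc = 0 := by
  simp [blockDiag41, b.is_lt]

lemma bd_ll (V : Matrix (Fin 4) (Fin 4) ℂ) :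
    blockDiag41 V (Fin.last 4) (Fin.last 4) = 1 := by
  simp [blockDiag41]

lemma sigma_scale (lam : ℝ) (i j : Fin 5) :
    sigmaForm lam lam i j = (lam : ℂ) * sigmaForm 1 1 i j := by
  simp [sigmaForm, Matrix.add_apply, Matrix.smul_apply]
  ring

lemma sigma_row4 (lam : ℝ) (j : Fin 5) : sigmaForm lam lam (Fin.last 4) j = 0 := by
  norm_num [sigmaForm, Matrix.single, Fin.ext_iff, Fin.val_last, v5_0, v5_1, v5_2, v5_3]

lemma sigma_col4 (lam : ℝ) (i : Fin 5) : sigmaForm lam lam i (Fin.last 4) = 0 := by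
  norm_num [sigmaForm, Matrix.single, Fin.ext_iff, Fin.val_last, v5_1, v5_3]

lemma c5_0 : (0:Fin 5) = Fin.castSucc 0 := rfl
lemma c5_1 : (1:Fin 5) = Fin.castSucc 1 := rfl
lemma c5_2 : (2:Fin 5) = Fin.castSucc 2 := rfl
lemma c5_3 : (3:Fin 5) = Fin.castSucc 3 := rfl

lemma bd_mem_unitary (V : Matrix (Fin 4) (Fin 4) ℂ) (hV : V ∈ Matrix.unitaryGroup (Fin 4) ℂ) :
    blockDiag41 V ∈ Matrix.unitaryGroup (Fin 5) ℂ := by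
  have h1V : star V * V = 1 := Matrix.mem_unitaryGroup_iff'.mp hV
  rw [Matrix.mem_unitaryGroup_iff']
  ext i j
  induction i using Fin.lastCases with
  | last =>
    induction j using Fin.lastCases with
    | last =>
      simp [Matrix.mul_apply, Fin.sum_univ_castSucc, Matrix.star_apply, bd_cl, bd_ll,
        Matrix.one_apply, bd04, bd14, bd24, bd34, bd44]
    | cast b =>
      simp [Matrix.mul_apply, Fin.sum_univ_castSucc, Matrix.star_apply, bd_cl, bd_ll,
        bd_cc, bd_lc, Matrix.one_apply, (Fin.castSucc_lt_last b).ne', bd04, bd14, bd24, bd34, bd44,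
        show blockDiag41 V 4 b.castSucc = 0 from bd_lc V b,
        show (4 : Fin 5) ≠ b.castSucc from (Fin.castSucc_lt_last b).ne']
  | cast a =>
    induction j using Fin.lastCases with
    | last =>
      simp [Matrix.mul_apply, Fin.sum_univ_castSucc, Matrix.star_apply, bd_cl, bd_ll,
        bd_cc, bd_lc, Matrix.one_apply, (Fin.castSucc_lt_last a).ne, bd04, bd14, bd24, bd34, bd44,
        show blockDiag41 V 4 a.castSucc = 0 from bd_lc V a,
        show a.castSucc ≠ (4 : Fin 5) from (Fin.castSucc_lt_last a).ne]
    | cast b =>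
      have h := congrFun (congrFun h1V a) b
      simp only [Matrix.mul_apply, Matrix.star_apply, Matrix.one_apply] at h
      simp only [Matrix.mul_apply, Matrix.star_apply, Matrix.one_apply]
      rw [Fin.sum_univ_castSucc]
      simp only [bd_cc, bd_lc, bd_ll, star_zero, zero_mul, add_zero, Fin.castSucc_inj]
      exact h

lemma bd_stab (lam : ℝ) (V : Matrix (Fin 4) (Fin 4) ℂ) (hJ : Vᵀ * J4 * V = J4) :
    (blockDiag41 V)ᵀ * sigmaForm lam lam * blockDiag41 V = sigmaForm lam lam := by
  have he : ∀ a b : Fin 4,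
      V 0 a * V 1 b - V 1 a * V 0 b + V 2 a * V 3 b - V 3 a * V 2 b = J4 a b := by
    intro a b; rw [← conj4, hJ]
  ext i j
  rw [conj5]
  induction i using Fin.lastCases with
  | last =>
    rw [sigma_row4]
    simp only [c5_0, c5_1, c5_2, c5_3, bd_cl]
    ring
  | cast a =>
    induction j using Fin.lastCases with
    | last =>
      rw [sigma_col4]
      simp only [c5_0, c5_1, c5_2, c5_3, bd_cl, bd_cc]
      ring
    | cast b =>
      rw [sigma_scale, aux_cast]
      simp only [c5_0, c5_1, c5_2, c5_3, bd_cc]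
      linear_combination (lam : ℂ) * he a b

end Sp2Aux

open Sp2Aux

/-- for `λ ≠ 0`, the stabilizer of `σ(λ, λ)` in `SU(5)` under the congruence
action consists exactly of the block-diagonal matrices `diag(V, 1)` with `V` a `4×4`
unitary matrix satisfying `Vᵀ J V = J`; i.e. it is the compact symplectic group
`Sp(2) = U(4) ∩ Sp(4, ℂ)`. -/
theorem stabilizer_sigma_sp2 (lam : ℝ) (hlam : lam ≠ 0) :
    ∀ U : Matrix (Fin 5) (Fin 5) ℂ,
      (U ∈ Matrix.specialUnitaryGroup (Fin 5) ℂ ∧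
          Uᵀ * sigmaForm lam lam * U = sigmaForm lam lam) ↔
        ∃ V : Matrix (Fin 4) (Fin 4) ℂ,
          V ∈ Matrix.unitaryGroup (Fin 4) ℂ ∧ Vᵀ * J4 * V = J4 ∧ U = blockDiag41 V := by
  have hlamC : (lam : ℂ) ≠ 0 := Complex.ofReal_ne_zero.mpr hlam
  intro U
  constructor
  · rintro ⟨hSU, hstab⟩
    obtain ⟨hU, hdet⟩ := Matrix.mem_specialUnitaryGroup_iff.mp hSU
    have h2 : U * star U = 1 := Matrix.mem_unitaryGroup_iff.mp hU
    have h1 : star U * U = 1 := Matrix.mem_unitaryGroup_iff'.mp hU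
    have hg : ∀ k k' : Fin 5,
        U k 0 * star (U k' 0) + U k 1 * star (U k' 1) + U k 2 * star (U k' 2) +
          U k 3 * star (U k' 3) + U k 4 * star (U k' 4) = if k = k' then 1 else 0 := by
      intro k k'
      have h := congrFun (congrFun h2 k) k'
      simpa [Matrix.mul_apply, Fin.sum_univ_five, Matrix.star_apply,
        Matrix.one_apply] using h
    have hs : ∀ k k' : Fin 5,
        star (U 0 k) * U 0 k' + star (U 1 k) * U 1 k' + star (U 2 k) * U 2 k' +
          star (U 3 k) * U 3 k' + star (U 4 k) * U 4 k' = if k = k' then 1 else 0 := by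
      intro k k'
      have h := congrFun (congrFun h1 k) k'
      simpa [Matrix.mul_apply, Fin.sum_univ_five, Matrix.star_apply,
        Matrix.one_apply] using h
    have hm : ∀ i j : Fin 5,
        U 0 i * U 1 j - U 1 i * U 0 j + U 2 i * U 3 j - U 3 i * U 2 j
          = sigmaForm 1 1 i j := by
      intro i j
      have h := congrFun (congrFun hstab i) j
      rw [conj5] at h
      have h' : (lam : ℂ) * (U 0 i * U 1 j - U 1 i * U 0 j + U 2 i * U 3 j - U 3 i * U 2 j)
          = (lam : ℂ) * (sigmaForm 1 1 i j) := by
        rw [h]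
        simp [sigmaForm]
        ring
      exact mul_left_cancel₀ hlamC h'

    have m01 : U 0 0 * U 1 1 - U 1 0 * U 0 1 + U 2 0 * U 3 1 - U 3 0 * U 2 1 = 1 := by
      rw [hm 0 1]
      norm_num [sigmaForm, Matrix.single, Fin.ext_iff, v5_0, v5_1, v5_2, v5_3, v5_4]
    have m02 : U 0 0 * U 1 2 - U 1 0 * U 0 2 + U 2 0 * U 3 2 - U 3 0 * U 2 2 = 0 := by
      rw [hm 0 2]
      norm_num [sigmaForm, Matrix.single, Fin.ext_iff, v5_0, v5_1, v5_2, v5_3, v5_4]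
    have m03 : U 0 0 * U 1 3 - U 1 0 * U 0 3 + U 2 0 * U 3 3 - U 3 0 * U 2 3 = 0 := by
      rw [hm 0 3]
      norm_num [sigmaForm, Matrix.single, Fin.ext_iff, v5_0, v5_1, v5_2, v5_3, v5_4]
    have m04 : U 0 0 * U 1 4 - U 1 0 * U 0 4 + U 2 0 * U 3 4 - U 3 0 * U 2 4 = 0 := by
      rw [hm 0 4]
      norm_num [sigmaForm, Matrix.single, Fin.ext_iff, v5_0, v5_1, v5_2, v5_3, v5_4]
    have m10 : U 0 1 * U 1 0 - U 1 1 * U 0 0 + U 2 1 * U 3 0 - U 3 1 * U 2 0 = -1 := by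
      rw [hm 1 0]
      norm_num [sigmaForm, Matrix.single, Fin.ext_iff, v5_0, v5_1, v5_2, v5_3, v5_4]
    have m12 : U 0 1 * U 1 2 - U 1 1 * U 0 2 + U 2 1 * U 3 2 - U 3 1 * U 2 2 = 0 := by
      rw [hm 1 2]
      norm_num [sigmaForm, Matrix.single, Fin.ext_iff, v5_0, v5_1, v5_2, v5_3, v5_4]
    have m13 : U 0 1 * U 1 3 - U 1 1 * U 0 3 + U 2 1 * U 3 3 - U 3 1 * U 2 3 = 0 := by
      rw [hm 1 3]
      norm_num [sigmaForm, Matrix.single, Fin.ext_iff, v5_0, v5_1, v5_2, v5_3, v5_4]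
    have m14 : U 0 1 * U 1 4 - U 1 1 * U 0 4 + U 2 1 * U 3 4 - U 3 1 * U 2 4 = 0 := by
      rw [hm 1 4]
      norm_num [sigmaForm, Matrix.single, Fin.ext_iff, v5_0, v5_1, v5_2, v5_3, v5_4]
    have m20 : U 0 2 * U 1 0 - U 1 2 * U 0 0 + U 2 2 * U 3 0 - U 3 2 * U 2 0 = 0 := by
      rw [hm 2 0]
      norm_num [sigmaForm, Matrix.single, Fin.ext_iff, v5_0, v5_1, v5_2, v5_3, v5_4]
    have m21 : U 0 2 * U 1 1 - U 1 2 * U 0 1 + U 2 2 * U 3 1 - U 3 2 * U 2 1 = 0 := by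
      rw [hm 2 1]
      norm_num [sigmaForm, Matrix.single, Fin.ext_iff, v5_0, v5_1, v5_2, v5_3, v5_4]
    have m23 : U 0 2 * U 1 3 - U 1 2 * U 0 3 + U 2 2 * U 3 3 - U 3 2 * U 2 3 = 1 := by
      rw [hm 2 3]
      norm_num [sigmaForm, Matrix.single, Fin.ext_iff, v5_0, v5_1, v5_2, v5_3, v5_4]
    have m24 : U 0 2 * U 1 4 - U 1 2 * U 0 4 + U 2 2 * U 3 4 - U 3 2 * U 2 4 = 0 := by
      rw [hm 2 4]
      norm_num [sigmaForm, Matrix.single, Fin.ext_iff, v5_0, v5_1, v5_2, v5_3, v5_4]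
    have m30 : U 0 3 * U 1 0 - U 1 3 * U 0 0 + U 2 3 * U 3 0 - U 3 3 * U 2 0 = 0 := by
      rw [hm 3 0]
      norm_num [sigmaForm, Matrix.single, Fin.ext_iff, v5_0, v5_1, v5_2, v5_3, v5_4]
    have m31 : U 0 3 * U 1 1 - U 1 3 * U 0 1 + U 2 3 * U 3 1 - U 3 3 * U 2 1 = 0 := by
      rw [hm 3 1]
      norm_num [sigmaForm, Matrix.single, Fin.ext_iff, v5_0, v5_1, v5_2, v5_3, v5_4]
    have m32 : U 0 3 * U 1 2 - U 1 3 * U 0 2 + U 2 3 * U 3 2 - U 3 3 * U 2 2 = -1 := by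
      rw [hm 3 2]
      norm_num [sigmaForm, Matrix.single, Fin.ext_iff, v5_0, v5_1, v5_2, v5_3, v5_4]
    have m34 : U 0 3 * U 1 4 - U 1 3 * U 0 4 + U 2 3 * U 3 4 - U 3 3 * U 2 4 = 0 := by
      rw [hm 3 4]
      norm_num [sigmaForm, Matrix.single, Fin.ext_iff, v5_0, v5_1, v5_2, v5_3, v5_4]
    have g00 : U 0 0 * star (U 0 0) + U 0 1 * star (U 0 1) + U 0 2 * star (U 0 2) + U 0 3 * star (U 0 3) + U 0 4 * star (U 0 4) = 1 := by
      have h := hg 0 0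
      rw [if_pos rfl] at h
      exact h
    have g01 : U 0 0 * star (U 1 0) + U 0 1 * star (U 1 1) + U 0 2 * star (U 1 2) + U 0 3 * star (U 1 3) + U 0 4 * star (U 1 4) = 0 := by
      have h := hg 0 1
      rw [if_neg (by decide)] at h
      exact h
    have g02 : U 0 0 * star (U 2 0) + U 0 1 * star (U 2 1) + U 0 2 * star (U 2 2) + U 0 3 * star (U 2 3) + U 0 4 * star (U 2 4) = 0 := by
      have h := hg 0 2
      rw [if_neg (by decide)] at h
      exact h
    have g03 : U 0 0 * star (U 3 0) + U 0 1 * star (U 3 1) + U 0 2 * star (U 3 2) + U 0 3 * star (U 3 3) + U 0 4 * star (U 3 4) = 0 := by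
      have h := hg 0 3
      rw [if_neg (by decide)] at h
      exact h
    have g04 : U 0 0 * star (U 4 0) + U 0 1 * star (U 4 1) + U 0 2 * star (U 4 2) + U 0 3 * star (U 4 3) + U 0 4 * star (U 4 4) = 0 := by
      have h := hg 0 4
      rw [if_neg (by decide)] at h
      exact h
    have g10 : U 1 0 * star (U 0 0) + U 1 1 * star (U 0 1) + U 1 2 * star (U 0 2) + U 1 3 * star (U 0 3) + U 1 4 * star (U 0 4) = 0 := by
      have h := hg 1 0
      rw [if_neg (by decide)] at h
      exact h
    have g11 : U 1 0 * star (U 1 0) + U 1 1 * star (U 1 1) + U 1 2 * star (U 1 2) + U 1 3 * star (U 1 3) + U 1 4 * star (U 1 4) = 1 := by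
      have h := hg 1 1
      rw [if_pos rfl] at h
      exact h
    have g12 : U 1 0 * star (U 2 0) + U 1 1 * star (U 2 1) + U 1 2 * star (U 2 2) + U 1 3 * star (U 2 3) + U 1 4 * star (U 2 4) = 0 := by
      have h := hg 1 2
      rw [if_neg (by decide)] at h
      exact h
    have g13 : U 1 0 * star (U 3 0) + U 1 1 * star (U 3 1) + U 1 2 * star (U 3 2) + U 1 3 * star (U 3 3) + U 1 4 * star (U 3 4) = 0 := by
      have h := hg 1 3
      rw [if_neg (by decide)] at h
      exact h
    have g14 : U 1 0 * star (U 4 0) + U 1 1 * star (U 4 1) + U 1 2 * star (U 4 2) + U 1 3 * star (U 4 3) + U 1 4 * star (U 4 4) = 0 := by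
      have h := hg 1 4
      rw [if_neg (by decide)] at h
      exact h
    have g20 : U 2 0 * star (U 0 0) + U 2 1 * star (U 0 1) + U 2 2 * star (U 0 2) + U 2 3 * star (U 0 3) + U 2 4 * star (U 0 4) = 0 := by
      have h := hg 2 0
      rw [if_neg (by decide)] at h
      exact h
    have g21 : U 2 0 * star (U 1 0) + U 2 1 * star (U 1 1) + U 2 2 * star (U 1 2) + U 2 3 * star (U 1 3) + U 2 4 * star (U 1 4) = 0 := by
      have h := hg 2 1
      rw [if_neg (by decide)] at h
      exact h
    have g22 : U 2 0 * star (U 2 0) + U 2 1 * star (U 2 1) + U 2 2 * star (U 2 2) + U 2 3 * star (U 2 3) + U 2 4 * star (U 2 4) = 1 := by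
      have h := hg 2 2
      rw [if_pos rfl] at h
      exact h
    have g23 : U 2 0 * star (U 3 0) + U 2 1 * star (U 3 1) + U 2 2 * star (U 3 2) + U 2 3 * star (U 3 3) + U 2 4 * star (U 3 4) = 0 := by
      have h := hg 2 3
      rw [if_neg (by decide)] at h
      exact h
    have g24 : U 2 0 * star (U 4 0) + U 2 1 * star (U 4 1) + U 2 2 * star (U 4 2) + U 2 3 * star (U 4 3) + U 2 4 * star (U 4 4) = 0 := by
      have h := hg 2 4
      rw [if_neg (by decide)] at h
      exact h
    have g30 : U 3 0 * star (U 0 0) + U 3 1 * star (U 0 1) + U 3 2 * star (U 0 2) + U 3 3 * star (U 0 3) + U 3 4 * star (U 0 4) = 0 := by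
      have h := hg 3 0
      rw [if_neg (by decide)] at h
      exact h
    have g31 : U 3 0 * star (U 1 0) + U 3 1 * star (U 1 1) + U 3 2 * star (U 1 2) + U 3 3 * star (U 1 3) + U 3 4 * star (U 1 4) = 0 := by
      have h := hg 3 1
      rw [if_neg (by decide)] at h
      exact h
    have g32 : U 3 0 * star (U 2 0) + U 3 1 * star (U 2 1) + U 3 2 * star (U 2 2) + U 3 3 * star (U 2 3) + U 3 4 * star (U 2 4) = 0 := by
      have h := hg 3 2
      rw [if_neg (by decide)] at h
      exact h
    have g33 : U 3 0 * star (U 3 0) + U 3 1 * star (U 3 1) + U 3 2 * star (U 3 2) + U 3 3 * star (U 3 3) + U 3 4 * star (U 3 4) = 1 := by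
      have h := hg 3 3
      rw [if_pos rfl] at h
      exact h
    have g34 : U 3 0 * star (U 4 0) + U 3 1 * star (U 4 1) + U 3 2 * star (U 4 2) + U 3 3 * star (U 4 3) + U 3 4 * star (U 4 4) = 0 := by
      have h := hg 3 4
      rw [if_neg (by decide)] at h
      exact h
    have g44 : U 4 0 * star (U 4 0) + U 4 1 * star (U 4 1) + U 4 2 * star (U 4 2) + U 4 3 * star (U 4 3) + U 4 4 * star (U 4 4) = 1 := by
      have h := hg 4 4
      rw [if_pos rfl] at h
      exact h
    have r14 : U 1 4 = 0 := by
      linear_combination star (U 0 0) * m04 + star (U 0 1) * m14 + star (U 0 2) * m24 + star (U 0 3) * m34 - U 1 4 * g00 + U 0 4 * g10 - U 3 4 * g20 + U 2 4 * g30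
    have r04 : U 0 4 = 0 := by
      linear_combination -(star (U 1 0) * m04 + star (U 1 1) * m14 + star (U 1 2) * m24 + star (U 1 3) * m34 - U 1 4 * g01 + U 0 4 * g11 - U 3 4 * g21 + U 2 4 * g31)
    have r34 : U 3 4 = 0 := by
      linear_combination star (U 2 0) * m04 + star (U 2 1) * m14 + star (U 2 2) * m24 + star (U 2 3) * m34 - U 1 4 * g02 + U 0 4 * g12 - U 3 4 * g22 + U 2 4 * g32
    have r24 : U 2 4 = 0 := by
      linear_combination -(star (U 3 0) * m04 + star (U 3 1) * m14 + star (U 3 2) * m24 + star (U 3 3) * m34 - U 1 4 * g03 + U 0 4 * g13 - U 3 4 * g23 + U 2 4 * g33)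
    have r41 : U 4 1 = 0 := by
      rw [← star_eq_zero]
      linear_combination -(star (U 4 1) * m01 + star (U 4 2) * m02 + star (U 4 3) * m03 + star (U 4 4) * m04 - U 0 0 * g14 + U 1 0 * g04 - U 2 0 * g34 + U 3 0 * g24)
    have r40 : U 4 0 = 0 := by
      rw [← star_eq_zero]
      linear_combination star (U 4 0) * m10 + star (U 4 2) * m12 + star (U 4 3) * m13 + star (U 4 4) * m14 - U 0 1 * g14 + U 1 1 * g04 - U 2 1 * g34 + U 3 1 * g24
    have r43 : U 4 3 = 0 := by
      rw [← star_eq_zero]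
      linear_combination -(star (U 4 0) * m20 + star (U 4 1) * m21 + star (U 4 3) * m23 + star (U 4 4) * m24 - U 0 2 * g14 + U 1 2 * g04 - U 2 2 * g34 + U 3 2 * g24)
    have r42 : U 4 2 = 0 := by
      rw [← star_eq_zero]
      linear_combination star (U 4 0) * m30 + star (U 4 1) * m31 + star (U 4 2) * m32 + star (U 4 4) * m34 - U 0 3 * g14 + U 1 3 * g04 - U 2 3 * g34 + U 3 3 * g24
    have hJV : (U.submatrix Fin.castSucc Fin.castSucc)ᵀ * J4 * (U.submatrix Fin.castSucc Fin.castSucc) = J4 := by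
      ext i j
      rw [conj4]
      simp only [Matrix.submatrix_apply, cs0, cs1, cs2, cs3]
      rw [← aux_cast i j]
      exact hm i.castSucc j.castSucc
    have hdV : (U.submatrix Fin.castSucc Fin.castSucc).det = 1 := det_of_symp _ hJV
    have hd5 := det5 U r04 r14 r24 r34
    rw [hdet, hdV, mul_one] at hd5
    have hc : U 4 4 = 1 := hd5.symm
    refine ⟨U.submatrix Fin.castSucc Fin.castSucc, ?_, hJV, ?_⟩
    · rw [Matrix.mem_unitaryGroup_iff']
      ext a b
      have h := hs a.castSucc b.castSucc
      have hz : U 4 b.castSucc = 0 := by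
        fin_cases b
        · exact r40
        · exact r41
        · exact r42
        · exact r43
      rw [show (if a.castSucc = b.castSucc then (1:ℂ) else 0) = (if a = b then 1 else 0) by
        simp [Fin.castSucc_inj]] at h
      simp only [Matrix.mul_apply, Fin.sum_univ_four, Matrix.star_apply,
        Matrix.submatrix_apply, Matrix.one_apply, cs0, cs1, cs2, cs3]
      linear_combination h - star (U 4 a.castSucc) * hz
    · ext i j
      fin_cases i <;> fin_cases j <;>
        simp [blockDiag41, Matrix.submatrix_apply, r04, r14, r24, r34,
          r40, r41, r42, r43, hc] <;>
        rfl
  · rintro ⟨V, hV, hJ, rfl⟩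
    have hdV : V.det = 1 := det_of_symp V hJ
    have h1V : star V * V = 1 := Matrix.mem_unitaryGroup_iff'.mp hV
    have sv : ∀ k k' : Fin 4,
        star (V 0 k) * V 0 k' + star (V 1 k) * V 1 k' + star (V 2 k) * V 2 k' +
          star (V 3 k) * V 3 k' = if k = k' then 1 else 0 := by
      intro k k'
      have h := congrFun (congrFun h1V k) k'
      simpa [Matrix.mul_apply, Fin.sum_univ_four, Matrix.star_apply,
        Matrix.one_apply] using h
    have he : ∀ a b : Fin 4,
        V 0 a * V 1 b - V 1 a * V 0 b + V 2 a * V 3 b - V 3 a * V 2 b = J4 a b := by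
      intro a b; rw [← conj4, hJ]
    have hsub : (blockDiag41 V).submatrix Fin.castSucc Fin.castSucc = V := by
      ext a b
      simp [blockDiag41, Matrix.submatrix_apply, a.is_lt, b.is_lt]
    constructor
    · rw [Matrix.mem_specialUnitaryGroup_iff]
      refine ⟨bd_mem_unitary V hV, ?_⟩
      have hz0 : blockDiag41 V 0 4 = 0 := bd_cl V 0
      have hz1 : blockDiag41 V 1 4 = 0 := bd_cl V 1
      have hz2 : blockDiag41 V 2 4 = 0 := bd_cl V 2
      have hz3 : blockDiag41 V 3 4 = 0 := bd_cl V 3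
      rw [det5 _ hz0 hz1 hz2 hz3, hsub, show blockDiag41 V 4 4 = 1 from bd_ll V, hdV, one_mul]
    · exact bd_stab lam V hJ
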